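/- Single-step SGD recursion under heterogeneity (established in the proof of Lemma B.4). Let E be a real Hilbert space, F : E → ℝ differentiable with S-Lipschitz gradient where S > 0, and f : E → ℝ differentiable with ‖∇F(a) − ∇f(a)‖ ≤ ε for all a ∈ E. Let τ ≥ 1 be an integer and 0 ≤ η ≤ 1/(√8·S·τ). Let x, y ∈ E and let g be an E-valued random variable on a probability space with 𝔼[g] = ∇F(x) and 𝔼[‖g − ∇F(x)‖²] ≤ σ². Then 𝔼[‖(x − η·g) − y‖²] ≤ (1 + 2/τ)·‖x − y‖² + 8τη²·(σ² + ε² + ‖∇f(y)‖²). -/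

import Mathlib

open MeasureTheory
open scoped RealInnerProductSpace

set_option maxHeartbeats 1000000

private theorem key_ineq (A B V s2 C η s t : ℝ) (hA : 0 ≤ A) (hB : 0 ≤ B) (hV : 0 ≤ V)
    (hVs : V ≤ s2) (hη : 0 ≤ η) (hs : 0 ≤ s) (ht : 1 ≤ t)
    (hst : s * t ≤ 1/2) (hB2 : B^2 ≤ 2*C) (hC : 0 ≤ C) :
    (((1+s)*A + η*B)^2 + η^2*V) * t ≤ (t + 2)*A^2 + 8*t^2*η^2*(s2 + C) := by
  have ht0 : (0:ℝ) < t := lt_of_lt_of_le one_pos ht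
  set P := (1+s)*A with hP
  set Q := η*B with hQ
  have hQ0 : 0 ≤ Q := mul_nonneg hη hB
  have hP0 : 0 ≤ P := mul_nonneg (by linarith) hA
  have h1 : t*(P+Q)^2 ≤ (t + 1/3)*P^2 + (t + 3*t^2)*Q^2 := by
    nlinarith [sq_nonneg (P - 3*t*Q), sq_nonneg P, sq_nonneg Q, mul_nonneg hP0 hQ0]
  have hs1 : s ≤ 1/2 := by nlinarith
  have h2 : (t + 1/3)*P^2 ≤ (t+2)*A^2 := by
    rw [hP, mul_pow]
    have key : (t + 1/3)*(1+s)^2 ≤ t + 2 := by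
      nlinarith [mul_nonneg hs hs, mul_nonneg (mul_nonneg hs hs) ht0.le]
    nlinarith [sq_nonneg A, mul_nonneg (mul_nonneg hA hA) (by nlinarith : (0:ℝ) ≤ t + 1/3)]
  have h3 : (t + 3*t^2)*Q^2 ≤ 8*t^2*η^2*C := by
    rw [hQ, mul_pow]
    have e1 : 0 ≤ t^2*η^2*(2*C - B^2) :=
      mul_nonneg (mul_nonneg (sq_nonneg t) (sq_nonneg η)) (by linarith)
    have e2 : 0 ≤ (t^2 - t)*(η^2*B^2) :=
      mul_nonneg (by nlinarith [sq_nonneg (t-1)]) (mul_nonneg (sq_nonneg η) (sq_nonneg B))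
    linarith [e1, e2, mul_nonneg (sq_nonneg t) (sq_nonneg η)]
  have h4 : η^2*V*t ≤ 8*t^2*η^2*s2 := by
    have e1 : 0 ≤ t*η^2*(s2 - V) := mul_nonneg (mul_nonneg ht0.le (sq_nonneg η)) (by linarith)
    have e2 : 0 ≤ (8*t^2 - t)*(η^2*s2) :=
      mul_nonneg (by nlinarith [sq_nonneg (t-1)]) (mul_nonneg (sq_nonneg η) (by linarith))
    linarith
  linarith [h1, h2, h3, h4]

/-- Single-step SGD recursion under heterogeneity (proof of Lemma B.4). -/
theorem stmt_7 {E : Type*} [NormedAddCommGroup E] [InnerProductSpace ℝ E] [CompleteSpace E]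
    {Ω : Type*} [MeasurableSpace Ω] (μ : Measure Ω) [IsProbabilityMeasure μ]
    (F f : E → ℝ) (S ε : ℝ) (hS : 0 < S)
    (hFdiff : Differentiable ℝ F) (hfdiff : Differentiable ℝ f)
    (hlip : ∀ a b : E, ‖gradient F a - gradient F b‖ ≤ S * ‖a - b‖)
    (hhet : ∀ a : E, ‖gradient F a - gradient f a‖ ≤ ε)
    (τ : ℕ) (hτ : 1 ≤ τ) (η : ℝ) (hη0 : 0 ≤ η) (hη : η ≤ 1 / (Real.sqrt 8 * S * τ))
    (x y : E) (g : Ω → E) (hg2 : MemLp g 2 μ)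
    (σ : ℝ)
    (hmean : ∫ ω, g ω ∂μ = gradient F x)
    (hvar : ∫ ω, ‖g ω - gradient F x‖ ^ 2 ∂μ ≤ σ ^ 2) :
    ∫ ω, ‖(x - η • g ω) - y‖ ^ 2 ∂μ ≤
      (1 + 2 / (τ : ℝ)) * ‖x - y‖ ^ 2 +
        8 * τ * η ^ 2 * (σ ^ 2 + ε ^ 2 + ‖gradient f y‖ ^ 2) := by
  set m := gradient F x with hm
  set h : Ω → E := fun ω => g ω - m with hh
  have hh2 : MemLp h 2 μ := hg2.sub (memLp_const m)
  have hhint : Integrable h μ := hh2.integrable one_le_two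
  have hgint : Integrable g μ := hg2.integrable one_le_two
  have hmean0 : ∫ ω, h ω ∂μ = 0 := by
    rw [hh]
    rw [integral_sub hgint (integrable_const m), hmean, integral_const]
    simp
  -- integrability of ‖h‖²
  have hnorm2 : Integrable (fun ω => ‖h ω‖ ^ 2) μ := by
    have h2 := hh2.integrable_norm_rpow two_ne_zero ENNReal.ofNat_ne_top
    have heq : (fun ω => ‖h ω‖ ^ ((2:ENNReal).toReal)) = fun ω => ‖h ω‖ ^ 2 := by
      funext ω
      rw [ENNReal.toReal_ofNat, show ((2:ℝ) = ((2:ℕ):ℝ)) by norm_num, Real.rpow_natCast]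
    rwa [heq] at h2
  set w : E := (x - y) - η • m with hw
  -- pointwise identity
  have hpt : ∀ ω, ‖(x - η • g ω) - y‖ ^ 2
      = ‖w‖ ^ 2 - 2 * η * ⟪w, h ω⟫ + η ^ 2 * ‖h ω‖ ^ 2 := by
    intro ω
    have hxy : (x - η • g ω) - y = w - η • h ω := by
      rw [hw, hh]; simp [smul_sub]; abel
    rw [hxy, norm_sub_sq_real, real_inner_smul_right, norm_smul]
    simp [mul_pow, abs_of_nonneg hη0]
    ring
  -- integral computation
  have hint2 : Integrable (fun ω => ⟪w, h ω⟫) μ := hhint.const_inner w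
  have hI : ∫ ω, ‖(x - η • g ω) - y‖ ^ 2 ∂μ
      = ‖w‖ ^ 2 + η ^ 2 * ∫ ω, ‖h ω‖ ^ 2 ∂μ := by
    calc ∫ ω, ‖(x - η • g ω) - y‖ ^ 2 ∂μ
        = ∫ ω, (‖w‖ ^ 2 - 2 * η * ⟪w, h ω⟫ + η ^ 2 * ‖h ω‖ ^ 2) ∂μ := by
          exact integral_congr_ae (Filter.Eventually.of_forall hpt)
      _ = (∫ _, ‖w‖ ^ 2 ∂μ) - (∫ ω, 2 * η * ⟪w, h ω⟫ ∂μ)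
            + ∫ ω, η ^ 2 * ‖h ω‖ ^ 2 ∂μ := by
          have i1 : Integrable (fun ω => ‖w‖ ^ 2 - 2 * η * ⟪w, h ω⟫) μ :=
            (integrable_const _).sub (hint2.const_mul _)
          have i2 : Integrable (fun ω => η ^ 2 * ‖h ω‖ ^ 2) μ := hnorm2.const_mul _
          rw [integral_add i1 i2, integral_sub (integrable_const _) (hint2.const_mul _)]
      _ = ‖w‖ ^ 2 + η ^ 2 * ∫ ω, ‖h ω‖ ^ 2 ∂μ := by
          rw [integral_const, integral_const_mul, integral_const_mul, integral_inner hhint,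
            hmean0]
          simp
  rw [hI]
  -- now the deterministic estimate
  set A := ‖x - y‖ with hA
  set D := ‖gradient f y‖ with hD
  have hε : 0 ≤ ε := le_trans (norm_nonneg _) (hhet y)
  have hmle : ‖m‖ ≤ S * A + (ε + D) := by
    have h1 := hlip x y
    have h2 := hhet y
    calc ‖m‖ = ‖(gradient F x - gradient F y) + (gradient F y - gradient f y)
        + gradient f y‖ := by rw [hm]; congr 1; abel
      _ ≤ ‖(gradient F x - gradient F y) + (gradient F y - gradient f y)‖
          + ‖gradient f y‖ := norm_add_le _ _
      _ ≤ ‖gradient F x - gradient F y‖ + ‖gradient F y - gradient f y‖ + D :=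
          by gcongr; exact norm_add_le _ _
      _ ≤ S * A + (ε + D) := by rw [hA]; linarith
  have hwle : ‖w‖ ≤ (1 + η * S) * A + η * (ε + D) := by
    calc ‖w‖ ≤ ‖x - y‖ + ‖η • m‖ := norm_sub_le _ _
      _ = A + η * ‖m‖ := by rw [norm_smul, Real.norm_eq_abs, abs_of_nonneg hη0, hA]
      _ ≤ A + η * (S * A + (ε + D)) := by
          gcongr
      _ = (1 + η * S) * A + η * (ε + D) := by ring
  set V := ∫ ω, ‖h ω‖ ^ 2 ∂μ with hV
  have hV0 : 0 ≤ V := integral_nonneg fun ω => sq_nonneg _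
  have hVσ : V ≤ σ ^ 2 := hvar
  have hτR : (1:ℝ) ≤ (τ:ℝ) := by exact_mod_cast hτ
  have hτ0 : (0:ℝ) < (τ:ℝ) := lt_of_lt_of_le one_pos hτR
  have hsqrt8 : (2:ℝ) ≤ Real.sqrt 8 := by
    rw [show (2:ℝ) = Real.sqrt 4 by rw [show (4:ℝ) = 2^2 by norm_num, Real.sqrt_sq]; norm_num]
    exact Real.sqrt_le_sqrt (by norm_num)
  have hst : η * S * (τ:ℝ) ≤ 1/2 := by
    have hpos : 0 < Real.sqrt 8 * S * τ := by positivity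
    have := (le_div_iff₀ hpos).1 hη
    calc η * S * (τ:ℝ) = η * (S * τ) := by ring
      _ ≤ (1 / Real.sqrt 8) := by
          rw [le_div_iff₀ (by positivity : (0:ℝ) < Real.sqrt 8)]
          calc η * (S * ↑τ) * Real.sqrt 8 = η * (Real.sqrt 8 * S * ↑τ) := by ring
            _ ≤ 1 := this
      _ ≤ 1/2 := by
          rw [div_le_div_iff₀ (by positivity) (by norm_num)]
          linarith
  have hB2 : (ε + D)^2 ≤ 2 * (ε^2 + D^2) := by nlinarith [sq_nonneg (ε - D)]
  have key := key_ineq A (ε + D) V (σ^2) (ε^2 + D^2) η (η * S) (τ:ℝ)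
    (norm_nonneg _) (by positivity) hV0 hVσ hη0 (by positivity) hτR hst hB2 (by positivity)
  have hw2 : ‖w‖^2 ≤ ((1 + η * S) * A + η * (ε + D))^2 := by
    have := pow_le_pow_left₀ (norm_nonneg w) hwle 2
    simpa using this
  have hrhs : (1 + 2 / (τ:ℝ)) * A ^ 2 + 8 * τ * η ^ 2 * (σ ^ 2 + ε ^ 2 + D ^ 2)
      = (((τ:ℝ) + 2) * A^2 + 8 * (τ:ℝ)^2 * η^2 * (σ^2 + (ε^2 + D^2))) / (τ:ℝ) := by
    field_simp
    ring
  rw [hrhs, le_div_iff₀ hτ0]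
  calc (‖w‖ ^ 2 + η ^ 2 * V) * (τ:ℝ)
      ≤ ((((1 + η * S) * A + η * (ε + D))^2) + η ^ 2 * V) * (τ:ℝ) := by
        gcongr
    _ ≤ ((τ:ℝ) + 2) * A^2 + 8 * (τ:ℝ)^2 * η^2 * (σ^2 + (ε^2 + D^2)) := key
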